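/- Let A, B be symmetric positive definite q×q matrices and set J = A^{−1/2}(A^{1/2} B A^{1/2})^{1/2} A^{−1/2}. Then J is symmetric positive definite, J A J = B (i.e., J is the optimal transport map matrix), and its inverse satisfies J^{−1} = A^{1/2}(A^{1/2} B A^{1/2})^{−1/2} A^{1/2}. Moreover the Fréchet derivative of (A,B) ↦ 2 tr((A^{1/2} B A^{1/2})^{1/2}) at (A,B) in the direction (G,H) ∈ S^q × S^q equals tr(J G) + tr(J^{−1} H). -/

import Mathlib

open Matrix

/-- The positive semidefinite square root `A^{1/2}` of a matrix
(junk value `0` if `A` is not positive semidefinite). -/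
noncomputable def msqrt {n : Type*} [Fintype n] [DecidableEq n]
    (A : Matrix n n ℝ) : Matrix n n ℝ := by
  classical exact if h : A.PosSemidef then
    (h.1.eigenvectorUnitary : Matrix n n ℝ) *
      diagonal ((↑) ∘ (fun x : ℝ => Real.sqrt x) ∘ h.1.eigenvalues) *
      (star h.1.eigenvectorUnitary : Matrix n n ℝ) else 0

/-- The squared Bures-Wasserstein distance
`d_W²(R, S) = tr R + tr S − 2 tr((R^{1/2} S R^{1/2})^{1/2})`. -/
noncomputable def dWsq {n : Type*} [Fintype n] [DecidableEq n]
    (R S : Matrix n n ℝ) : ℝ :=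
  R.trace + S.trace - 2 * (msqrt (msqrt R * S * msqrt R)).trace

attribute [local instance] Matrix.normedAddCommGroup Matrix.normedSpace

/-- The optimal-transport map matrix `J = A^{−1/2}(A^{1/2} B A^{1/2})^{1/2} A^{−1/2}`. -/
noncomputable def otMap {q : ℕ} (A B : Matrix (Fin q) (Fin q) ℝ) :
    Matrix (Fin q) (Fin q) ℝ :=
  (msqrt A)⁻¹ * msqrt (msqrt A * B * msqrt A) * (msqrt A)⁻¹

open Filter

namespace OTAux

variable {q : ℕ}

local notation "Mq" => Matrix (Fin q) (Fin q) ℝ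

open MatrixOrder in
lemma msqrt_eq_cfc {A : Mq} (h : A.PosSemidef) : msqrt A = CFC.sqrt A := by
  rw [CFC.sqrt_eq_real_sqrt A (nonneg_iff_posSemidef.mpr h), cfcₙ_eq_cfc, h.1.cfc_eq, msqrt, dif_pos h,
    IsHermitian.cfc, Unitary.conjStarAlgAut_apply]
  rfl

lemma msqrt_psd {A : Mq} (h : A.PosSemidef) : (msqrt A).PosSemidef := by
  rw [msqrt_eq_cfc h]; open MatrixOrder in exact nonneg_iff_posSemidef.mp (CFC.sqrt_nonneg A)

lemma msqrt_mul_self {A : Mq} (h : A.PosSemidef) : msqrt A * msqrt A = A := by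
  rw [msqrt_eq_cfc h]
  open MatrixOrder in exact CFC.sqrt_mul_sqrt_self A (nonneg_iff_posSemidef.mpr h)

lemma msqrt_herm {A : Mq} (h : A.PosSemidef) : (msqrt A).IsHermitian :=
  (msqrt_psd h).isHermitian

lemma msqrt_eq_of_sq {S A : Mq} (hS : S.PosSemidef) (hSA : S * S = A) : msqrt A = S := by
  have hA : A.PosSemidef := by
    subst hSA
    simpa [pow_two] using hS.pow 2
  rw [msqrt_eq_cfc hA]
  open MatrixOrder in exact CFC.sqrt_unique hSA (nonneg_iff_posSemidef.mpr hS)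

lemma vec_ne {R : Mq} (hR : IsUnit R.det) {x : Fin q → ℝ} (hx : x ≠ 0) : R *ᵥ x ≠ 0 := by
  intro h0
  apply hx
  have : R⁻¹ *ᵥ (R *ᵥ x) = R⁻¹ *ᵥ (0 : Fin q → ℝ) := by rw [h0]
  simpa [Matrix.mulVec_mulVec, Matrix.nonsing_inv_mul R hR] using this

lemma posDef_of_psd_isUnit {A : Mq} (h : A.PosSemidef) (hu : IsUnit A.det) : A.PosDef := by
  refine Matrix.PosDef.of_dotProduct_mulVec_pos h.1 fun x hx =>
    lt_of_le_of_ne (h.dotProduct_mulVec_nonneg x) fun heq => ?_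
  have h0 : A *ᵥ x = 0 := (h.dotProduct_mulVec_zero_iff x).mp heq.symm
  exact vec_ne hu hx h0

lemma msqrt_posDef {A : Mq} (hA : A.PosDef) : (msqrt A).PosDef := by
  refine posDef_of_psd_isUnit (msqrt_psd hA.posSemidef) ?_
  have hd : (msqrt A).det * (msqrt A).det = A.det := by
    rw [← Matrix.det_mul, msqrt_mul_self hA.posSemidef]
  have : A.det ≠ 0 := ne_of_gt hA.det_pos
  refine isUnit_iff_ne_zero.mpr fun h0 => this ?_
  rw [← hd, h0, zero_mul]

lemma posDef_conj {C R : Mq} (hC : C.PosDef) (hR : IsUnit R.det) : (Rᴴ * C * R).PosDef := by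
  refine Matrix.PosDef.of_dotProduct_mulVec_pos
    (Matrix.isHermitian_conjTranspose_mul_mul R hC.1) fun x hx => ?_
  have h1 : R *ᵥ x ≠ 0 := vec_ne hR hx
  simpa only [star_mulVec, dotProduct_mulVec, Matrix.vecMul_vecMul] using
    hC.dotProduct_mulVec_pos h1

lemma det_isUnit {R : Mq} (hR : R.PosDef) : IsUnit R.det :=
  isUnit_iff_ne_zero.mpr hR.det_pos.ne'

lemma posDef_sandwich {B R : Mq} (hB : B.PosDef) (hR : R.PosDef) : (R * B * R).PosDef := by
  have h := posDef_conj hB (det_isUnit hR)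
  rwa [hR.isHermitian] at h

lemma herm_transpose {A : Mq} (h : A.IsHermitian) : Aᵀ = A := by
  have : Aᵀ = Aᴴ := by ext i j; simp [Matrix.conjTranspose_apply]
  rw [this, h]

section Algebra

lemma inner_posDef {A B : Mq} (hA : A.PosDef) (hB : B.PosDef) : (msqrt A * B * msqrt A).PosDef :=
  posDef_sandwich hB (msqrt_posDef hA)

lemma otMap_posDef {A B : Mq} (hA : A.PosDef) (hB : B.PosDef) : (otMap A B).PosDef := by
  unfold otMap
  exact posDef_sandwich (msqrt_posDef (inner_posDef hA hB)) (msqrt_posDef hA).inv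

lemma otMap_mul {A B : Mq} (hA : A.PosDef) (hB : B.PosDef) :
    otMap A B * A * otMap A B = B := by
  set R := msqrt A with hR
  set S := msqrt (R * B * R) with hS
  have hRu : IsUnit R.det := det_isUnit (msqrt_posDef hA)
  have h1 : R⁻¹ * R = 1 := Matrix.nonsing_inv_mul R hRu
  have h2 : R * R⁻¹ = 1 := Matrix.mul_nonsing_inv R hRu
  have hS2 : S * S = R * B * R := msqrt_mul_self (inner_posDef hA hB).posSemidef
  have hAR : A = R * R := (msqrt_mul_self hA.posSemidef).symm
  show R⁻¹ * S * R⁻¹ * A * (R⁻¹ * S * R⁻¹) = B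
  calc R⁻¹ * S * R⁻¹ * A * (R⁻¹ * S * R⁻¹)
      = R⁻¹ * S * (R⁻¹ * R) * (R * R⁻¹) * S * R⁻¹ := by
        rw [hAR]; simp only [Matrix.mul_assoc]
    _ = R⁻¹ * (S * S) * R⁻¹ := by
        rw [h1, h2, Matrix.mul_one, Matrix.mul_one]; simp only [Matrix.mul_assoc]
    _ = R⁻¹ * R * B * (R * R⁻¹) := by rw [hS2]; simp only [Matrix.mul_assoc]
    _ = B := by rw [h1, h2, Matrix.one_mul, Matrix.mul_one]

lemma otMap_inv {A B : Mq} (hA : A.PosDef) (hB : B.PosDef) :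
    (otMap A B)⁻¹ = msqrt A * (msqrt (msqrt A * B * msqrt A))⁻¹ * msqrt A := by
  set R := msqrt A with hR
  set S := msqrt (R * B * R) with hS
  have hRu : IsUnit R.det := det_isUnit (msqrt_posDef hA)
  show (R⁻¹ * S * R⁻¹)⁻¹ = R * S⁻¹ * R
  rw [Matrix.mul_inv_rev, Matrix.mul_inv_rev, Matrix.nonsing_inv_nonsing_inv R hRu,
    Matrix.mul_assoc]

lemma trace_conj {R Z : Mq} (h : R⁻¹ * R = 1) : (R * Z * R⁻¹).trace = Z.trace := by
  rw [Matrix.trace_mul_comm, ← Matrix.mul_assoc, h, Matrix.one_mul]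

lemma key_eq {A B : Mq} (hA : A.PosDef) (hB : B.PosDef) :
    (otMap A B * A).trace + ((otMap A B)⁻¹ * B).trace
      = 2 * (msqrt (msqrt A * B * msqrt A)).trace := by
  set R := msqrt A with hRdef
  set S := msqrt (R * B * R) with hS
  have hRu : IsUnit R.det := det_isUnit (msqrt_posDef hA)
  have h1 : R⁻¹ * R = 1 := Matrix.nonsing_inv_mul R hRu
  have h2 : R * R⁻¹ = 1 := Matrix.mul_nonsing_inv R hRu
  have hSpd : S.PosDef := msqrt_posDef (inner_posDef hA hB)
  have hSu : IsUnit S.det := det_isUnit hSpd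
  have hS1 : S⁻¹ * S = 1 := Matrix.nonsing_inv_mul S hSu
  have hS2 : S * S = R * B * R := msqrt_mul_self (inner_posDef hA hB).posSemidef
  have hAR : A = R * R := (msqrt_mul_self hA.posSemidef).symm
  have e1 : otMap A B * A = R⁻¹ * (S * R) := by
    show R⁻¹ * S * R⁻¹ * A = _
    rw [hAR]
    calc R⁻¹ * S * R⁻¹ * (R * R) = R⁻¹ * S * (R⁻¹ * R) * R := by simp only [Matrix.mul_assoc]
      _ = R⁻¹ * (S * R) := by rw [h1, Matrix.mul_one, Matrix.mul_assoc]
  have t1 : (otMap A B * A).trace = S.trace := by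
    rw [e1, Matrix.trace_mul_comm, Matrix.mul_assoc, h2, Matrix.mul_one]
  have e2 : (otMap A B)⁻¹ * B = R * (S⁻¹ * (R * B)) := by
    rw [otMap_inv hA hB, ← hRdef, ← hS, Matrix.mul_assoc, Matrix.mul_assoc]
  have t2 : ((otMap A B)⁻¹ * B).trace = S.trace := by
    rw [e2, Matrix.trace_mul_comm]
    have : S⁻¹ * (R * B) * R = S⁻¹ * (R * B * R) := by simp only [Matrix.mul_assoc]
    rw [this, ← hS2, ← Matrix.mul_assoc, hS1, Matrix.one_mul]
  rw [t1, t2]; ring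

end Algebra

section Fro

def fro (X : Mq) : ℝ := ∑ i, ∑ j, (X i j) ^ 2

lemma fro_nonneg (X : Mq) : 0 ≤ fro X := by
  unfold fro; positivity

lemma trace_mul_entries (X Y : Mq) : (X * Y).trace = ∑ i, ∑ j, X i j * Y j i := by
  simp [Matrix.trace, Matrix.diag, Matrix.mul_apply]

lemma trace_nonneg_psd {X : Mq} (h : X.PosSemidef) : 0 ≤ X.trace := by
  have : ∀ i, 0 ≤ X i i := by
    intro i
    have h2 := h.dotProduct_mulVec_nonneg (Pi.single i 1)
    have : star (Pi.single i (1:ℝ)) ⬝ᵥ X *ᵥ Pi.single i 1 = X i i := by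
      simp [dotProduct, Matrix.mulVec, Pi.single_apply, Finset.mul_sum,
        mul_ite, ite_mul]
    rwa [this] at h2
  exact Finset.sum_nonneg fun i _ => this i

lemma fro_eq_trace (X : Mq) : fro X = (Xᵀ * X).trace := by
  rw [trace_mul_entries]
  simp only [Matrix.transpose_apply, fro, pow_two]
  exact Finset.sum_comm ..

lemma trace_mul_transpose_nonneg (X : Mq) : 0 ≤ (X * Xᵀ).trace := by
  have := fro_nonneg Xᵀ
  rwa [fro_eq_trace, Matrix.transpose_transpose] at this

lemma trace_mul_sq_le (X Y : Mq) : ((X * Y).trace) ^ 2 ≤ fro X * fro Y := by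
  rw [trace_mul_entries]
  have h := Finset.sum_mul_sq_le_sq_mul_sq Finset.univ
    (fun p : Fin q × Fin q => X p.1 p.2) (fun p : Fin q × Fin q => Y p.2 p.1)
  calc (∑ i, ∑ j, X i j * Y j i) ^ 2
      = (∑ p : Fin q × Fin q, X p.1 p.2 * Y p.2 p.1) ^ 2 := by
        rw [Fintype.sum_prod_type]
    _ ≤ (∑ p : Fin q × Fin q, (X p.1 p.2) ^ 2) * ∑ p : Fin q × Fin q, (Y p.2 p.1) ^ 2 := h
    _ = fro X * fro Y := by
        rw [Fintype.sum_prod_type, Fintype.sum_prod_type]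
        unfold fro
        congr 1
        exact Finset.sum_comm ..

lemma fro_mul_le (X Y : Mq) : fro (X * Y) ≤ fro X * fro Y := by
  unfold fro
  calc ∑ i, ∑ j, ((X * Y) i j) ^ 2
      ≤ ∑ i, ∑ j, ((∑ k, (X i k) ^ 2) * ∑ k, (Y k j) ^ 2) := by
        refine Finset.sum_le_sum fun i _ => Finset.sum_le_sum fun j _ => ?_
        rw [Matrix.mul_apply]
        exact Finset.sum_mul_sq_le_sq_mul_sq Finset.univ _ _
    _ = (∑ i, ∑ k, (X i k) ^ 2) * ∑ j, ∑ k, (Y k j) ^ 2 := by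
        simp only [← Finset.mul_sum]
        rw [← Finset.sum_mul]
    _ = (∑ i, ∑ k, (X i k) ^ 2) * ∑ k, ∑ j, (Y k j) ^ 2 := by
        congr 1
        exact Finset.sum_comm ..

lemma entry_sq_le_fro (X : Mq) (i j : Fin q) : (X i j) ^ 2 ≤ fro X := by
  unfold fro
  calc (X i j) ^ 2 ≤ ∑ j', (X i j') ^ 2 :=
        Finset.single_le_sum (fun k _ => sq_nonneg (X i k)) (Finset.mem_univ j)
    _ ≤ ∑ i', ∑ j', (X i' j') ^ 2 :=
        Finset.single_le_sum (f := fun i' => ∑ j', (X i' j') ^ 2)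
          (fun k _ => Finset.sum_nonneg fun l _ => sq_nonneg _) (Finset.mem_univ i)

lemma norm_le_sqrt_fro (X : Mq) : ‖X‖ ≤ Real.sqrt (fro X) := by
  refine (Matrix.norm_le_iff (Real.sqrt_nonneg _)).mpr fun i j => ?_
  rw [Real.norm_eq_abs]
  exact Real.abs_le_sqrt (entry_sq_le_fro X i j)

lemma fro_le_norm (X : Mq) : fro X ≤ (q : ℝ) ^ 2 * ‖X‖ ^ 2 := by
  unfold fro
  calc ∑ i, ∑ j, (X i j) ^ 2 ≤ ∑ _i : Fin q, ∑ _j : Fin q, ‖X‖ ^ 2 := by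
        refine Finset.sum_le_sum fun i _ => Finset.sum_le_sum fun j _ => ?_
        have h := Matrix.norm_entry_le_entrywise_sup_norm X (i := i) (j := j)
        rw [Real.norm_eq_abs] at h
        calc (X i j) ^ 2 = |X i j| ^ 2 := (sq_abs _).symm
          _ ≤ ‖X‖ ^ 2 := by
              have : (0:ℝ) ≤ |X i j| := abs_nonneg _
              nlinarith
    _ = (q : ℝ) ^ 2 * ‖X‖ ^ 2 := by
        simp [Finset.sum_const, Finset.card_univ]
        ring

lemma abs_trace_mul_le (X Y : Mq) : |(X * Y).trace| ≤ (q : ℝ) ^ 2 * (‖X‖ * ‖Y‖) := by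
  rw [trace_mul_entries]
  calc |∑ i, ∑ j, X i j * Y j i| ≤ ∑ i, ∑ j, |X i j * Y j i| := by
        refine (Finset.abs_sum_le_sum_abs _ _).trans ?_
        exact Finset.sum_le_sum fun i _ => Finset.abs_sum_le_sum_abs _ _
    _ ≤ ∑ _i : Fin q, ∑ _j : Fin q, ‖X‖ * ‖Y‖ := by
        refine Finset.sum_le_sum fun i _ => Finset.sum_le_sum fun j _ => ?_
        rw [abs_mul]
        have h1 := Matrix.norm_entry_le_entrywise_sup_norm X (i := i) (j := j)
        have h2 := Matrix.norm_entry_le_entrywise_sup_norm Y (i := j) (j := i)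
        rw [Real.norm_eq_abs] at h1 h2
        exact mul_le_mul h1 h2 (abs_nonneg _) (norm_nonneg _)
    _ = (q : ℝ) ^ 2 * (‖X‖ * ‖Y‖) := by
        simp [Finset.sum_const, Finset.card_univ]
        ring

end Fro

section Lip

lemma msqrt_lip {A : Mq} (hA : A.PosDef) :
    ∃ c : ℝ, 0 ≤ c ∧ ∀ X : Mq, X.PosSemidef →
      fro (msqrt X - msqrt A) ≤ c * fro (X - A) := by
  set SA := msqrt A with hSAdef
  have hSApd : SA.PosDef := msqrt_posDef hA
  set Q := msqrt SA with hQdef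
  have hQpd : Q.PosDef := msqrt_posDef hSApd
  have hQu : IsUnit Q.det := det_isUnit hQpd
  set K := fro Q⁻¹ with hKdef
  have hK : 0 ≤ K := fro_nonneg _
  refine ⟨K ^ 2, sq_nonneg _, fun X hX => ?_⟩
  set SX := msqrt X with hSXdef
  set Δ := SX - SA with hΔdef
  set E := X - A with hEdef
  have hΔherm : Δ.IsHermitian := (msqrt_herm hX).sub (msqrt_herm hA.posSemidef)
  have hsyl : SX * Δ + Δ * SA = E := by
    rw [hΔdef, hEdef, mul_sub, sub_mul, msqrt_mul_self hX, msqrt_mul_self hA.posSemidef]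
    abel
  have hSXpsd : SX.PosSemidef := msqrt_psd hX
  -- trace (Δ * E) = trace (Δ * (SX * Δ)) + trace ((Δ * Δ) * SA)
  have tΔE : (Δ * E).trace = (Δ * (SX * Δ)).trace + (Δ * Δ * SA).trace := by
    rw [← hsyl, mul_add, Matrix.trace_add, ← Matrix.mul_assoc, ← Matrix.mul_assoc]
  -- first summand nonneg
  have h1 : 0 ≤ (Δ * (SX * Δ)).trace := by
    have hpsd : (Δᴴ * SX * Δ).PosSemidef := hSXpsd.conjTranspose_mul_mul_same Δ
    have : Δᴴ * SX * Δ = Δ * (SX * Δ) := by rw [hΔherm, Matrix.mul_assoc]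
    rw [← this]
    exact trace_nonneg_psd hpsd
  -- lower bound on second summand
  have hQQ : Q * Q = SA := msqrt_mul_self hSApd.posSemidef
  have hQ1 : Q⁻¹ * Q = 1 := Matrix.nonsing_inv_mul Q hQu
  have hQt : Qᵀ = Q := herm_transpose hQpd.isHermitian
  have hfroQΔ : fro (Q * Δ) = (Δ * Δ * SA).trace := by
    rw [fro_eq_trace, Matrix.transpose_mul, hQt]
    -- (Δᵀ * Q) * (Q * Δ)
    have hΔt : Δᵀ = Δ := herm_transpose hΔherm
    rw [hΔt]
    calc (Δ * Q * (Q * Δ)).trace = (Δ * (Q * Q) * Δ).trace := by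
          simp only [Matrix.mul_assoc]
      _ = (Δ * Δ * (Q * Q)).trace := by
          rw [Matrix.trace_mul_comm, Matrix.mul_assoc]
      _ = (Δ * Δ * SA).trace := by rw [hQQ]
  have h2 : fro Δ ≤ K * (Δ * Δ * SA).trace := by
    have hnice : Q⁻¹ * (Q * Δ) = Δ := by rw [← Matrix.mul_assoc, hQ1, Matrix.one_mul]
    calc fro Δ = fro (Q⁻¹ * (Q * Δ)) := by rw [hnice]
      _ ≤ K * fro (Q * Δ) := fro_mul_le _ _
      _ = K * (Δ * Δ * SA).trace := by rw [hfroQΔ]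
  have h3 : fro Δ ≤ K * (Δ * E).trace := by
    rw [tΔE]
    nlinarith [h1, hK, h2]
  have hCS : ((Δ * E).trace) ^ 2 ≤ fro Δ * fro E := trace_mul_sq_le Δ E
  have hfroE : 0 ≤ fro E := fro_nonneg E
  rcases ((fro_nonneg Δ).eq_or_lt.imp Eq.symm id) with h0 | hpos
  · rw [h0]; positivity
  · set t := (Δ * E).trace with ht
    have hsq : fro Δ ^ 2 ≤ (K * t) ^ 2 := pow_le_pow_left₀ (fro_nonneg Δ) h3 2
    have hsq2 : (K * t) ^ 2 ≤ K ^ 2 * (fro Δ * fro E) := by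
      rw [mul_pow]
      exact mul_le_mul_of_nonneg_left hCS (sq_nonneg K)
    nlinarith [hsq, hsq2, hpos]

end Lip

section Open

lemma one_add_posDef {F : Mq} (hF : F.IsHermitian) (hsmall : (q : ℝ) * ‖F‖ < 1) :
    (1 + F).PosDef := by
  refine Matrix.PosDef.of_dotProduct_mulVec_pos ((Matrix.isHermitian_one).add hF)
    fun x hx => ?_
  have hstar : star x = x := by funext i; simp
  rw [Matrix.add_mulVec, Matrix.one_mulVec, dotProduct_add, hstar]
  have hxx : x ⬝ᵥ x = ∑ i, (x i) ^ 2 := by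
    simp [dotProduct, pow_two]
  have hxpos : 0 < ∑ i, (x i) ^ 2 := by
    have : ∃ i, x i ≠ 0 := by
      by_contra h
      push_neg at h
      exact hx (funext fun i => h i)
    obtain ⟨i, hi⟩ := this
    refine Finset.sum_pos' (fun j _ => sq_nonneg _) ⟨i, Finset.mem_univ i, ?_⟩
    positivity
  have hFbound : |x ⬝ᵥ F *ᵥ x| ≤ ‖F‖ * (∑ i, |x i|) ^ 2 := by
    have h1 : x ⬝ᵥ F *ᵥ x = ∑ i, ∑ j, x i * (F i j * x j) := by
      simp [dotProduct, Matrix.mulVec, Finset.mul_sum]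
    rw [h1]
    calc |∑ i, ∑ j, x i * (F i j * x j)| ≤ ∑ i, ∑ j, |x i * (F i j * x j)| := by
          refine (Finset.abs_sum_le_sum_abs _ _).trans ?_
          exact Finset.sum_le_sum fun i _ => Finset.abs_sum_le_sum_abs _ _
      _ ≤ ∑ i, ∑ j, |x i| * (‖F‖ * |x j|) := by
          refine Finset.sum_le_sum fun i _ => Finset.sum_le_sum fun j _ => ?_
          rw [abs_mul, abs_mul]
          have hf := Matrix.norm_entry_le_entrywise_sup_norm F (i := i) (j := j)
          rw [Real.norm_eq_abs] at hf
          gcongr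
      _ = ‖F‖ * (∑ i, |x i|) ^ 2 := by
          simp only [← Finset.mul_sum, ← Finset.sum_mul]
          ring
  have hcheb : (∑ i, |x i|) ^ 2 ≤ (q : ℝ) * ∑ i, (x i) ^ 2 := by
    have h := sq_sum_le_card_mul_sum_sq (s := (Finset.univ : Finset (Fin q)))
      (f := fun i => |x i|)
    simpa [Finset.card_univ, sq_abs] using h
  have hnorm : 0 ≤ ‖F‖ := norm_nonneg F
  have hq : 0 ≤ (q : ℝ) := Nat.cast_nonneg q
  have hkey : |x ⬝ᵥ F *ᵥ x| ≤ ‖F‖ * ((q : ℝ) * ∑ i, (x i) ^ 2) :=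
    hFbound.trans (mul_le_mul_of_nonneg_left hcheb hnorm)
  rw [hxx]
  have := abs_le.mp hkey
  nlinarith [this.1, hxpos, hsmall]

lemma herm_conj {E R : Mq} (hE : E.IsHermitian) (hR : R.IsHermitian) :
    (R * E * R).IsHermitian := by
  have : (R * E * R)ᴴ = Rᴴ * Eᴴ * Rᴴ := by
    rw [Matrix.conjTranspose_mul, Matrix.conjTranspose_mul, Matrix.mul_assoc]
  rw [Matrix.IsHermitian, this, hE.eq, hR.eq]

lemma eventually_posDef {A : Mq} (hA : A.PosDef) :
    ∀ᶠ X : Mq in nhds A, X.IsHermitian → X.PosDef := by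
  set R := (msqrt A)⁻¹ with hRdef
  have hRApd : (msqrt A).PosDef := msqrt_posDef hA
  have hRpd : R.PosDef := hRApd.inv
  have hcont : Continuous fun X : Mq => (q : ℝ) * ‖R * (X - A) * R‖ := by
    have h1 : Continuous fun X : Mq => R * (X - A) * R :=
      (continuous_const.matrix_mul (continuous_id.sub continuous_const)).matrix_mul
        continuous_const
    exact continuous_const.mul h1.norm
  have hev : ∀ᶠ X : Mq in nhds A, (q : ℝ) * ‖R * (X - A) * R‖ < 1 := by
    have h2 := hcont.continuousAt (x := A)
    rw [ContinuousAt] at h2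
    have h3 : Tendsto (fun X : Mq => (q : ℝ) * ‖R * (X - A) * R‖) (nhds A) (nhds 0) := by
      simpa using h2
    exact h3.eventually_lt_const (by norm_num)
  filter_upwards [hev] with X hX hherm
  set F := R * (X - A) * R with hFdef
  have hFherm : F.IsHermitian := herm_conj (hherm.sub hA.isHermitian) hRpd.isHermitian
  have hN : (1 + F).PosDef := one_add_posDef hFherm hX
  have hXeq : X = msqrt A * (1 + F) * msqrt A := by
    have hu : IsUnit (msqrt A).det := det_isUnit hRApd
    have h1 : msqrt A * R = 1 := Matrix.mul_nonsing_inv _ hu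
    have h2 : R * msqrt A = 1 := Matrix.nonsing_inv_mul _ hu
    have hAA : msqrt A * msqrt A = A := msqrt_mul_self hA.posSemidef
    calc X = A + (X - A) := by abel
      _ = msqrt A * 1 * msqrt A + msqrt A * F * msqrt A := by
          rw [Matrix.mul_one, hAA, hFdef]
          congr 1
          calc X - A = 1 * (X - A) * 1 := by rw [Matrix.one_mul, Matrix.mul_one]
            _ = msqrt A * R * (X - A) * (R * msqrt A) := by rw [h1, h2, Matrix.mul_assoc]
            _ = msqrt A * (R * (X - A) * R) * msqrt A := by simp only [Matrix.mul_assoc]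
      _ = msqrt A * (1 + F) * msqrt A := by
          rw [mul_add, add_mul]
  rw [hXeq]
  exact posDef_sandwich hN hRApd

end Open

section KeyIneq

lemma key_ineq {A B M : Mq} (hA : A.PosDef) (hB : B.PosDef) (hM : M.PosDef) :
    2 * (msqrt (msqrt A * B * msqrt A)).trace ≤ (M * A).trace + (M⁻¹ * B).trace := by
  set R := msqrt A with hRdef
  have hRpd : R.PosDef := msqrt_posDef hA
  have hRu : IsUnit R.det := det_isUnit hRpd
  have hRR1 : R⁻¹ * R = 1 := Matrix.nonsing_inv_mul R hRu
  have hRR2 : R * R⁻¹ = 1 := Matrix.mul_nonsing_inv R hRu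
  have hAA : R * R = A := msqrt_mul_self hA.posSemidef
  set C := R * M * R with hCdef
  have hCpd : C.PosDef := posDef_sandwich hM hRpd
  set D := R * B * R with hDdef
  have hDpd : D.PosDef := posDef_sandwich hB hRpd
  set S := msqrt D with hSdef
  have hSpd : S.PosDef := msqrt_posDef hDpd
  set T := msqrt C with hTdef
  have hTpd : T.PosDef := msqrt_posDef hCpd
  have hTu : IsUnit T.det := det_isUnit hTpd
  have hT2 : T * T = C := msqrt_mul_self hCpd.posSemidef
  have hS2 : S * S = D := msqrt_mul_self hDpd.posSemidef
  have hT1 : T⁻¹ * T = 1 := Matrix.nonsing_inv_mul T hTu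
  have hT1' : T * T⁻¹ = 1 := Matrix.mul_nonsing_inv T hTu
  set X := T - T⁻¹ * S with hXdef
  have h0 : 0 ≤ (X * Xᵀ).trace := trace_mul_transpose_nonneg X
  have hXt : Xᵀ = T - S * T⁻¹ := by
    rw [hXdef, Matrix.transpose_sub, Matrix.transpose_mul, Matrix.transpose_nonsing_inv,
      herm_transpose hTpd.isHermitian, herm_transpose hSpd.isHermitian]
  have hprod : X * Xᵀ = (T * T - T * (S * T⁻¹)) - ((T⁻¹ * S) * T - (T⁻¹ * S) * (S * T⁻¹)) := by
    rw [hXt, hXdef, sub_mul, mul_sub, mul_sub]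
  have l1 : (T * T).trace = (M * A).trace := by
    rw [hT2, hCdef, Matrix.trace_mul_comm, ← Matrix.mul_assoc, hAA, Matrix.trace_mul_comm]
  have l2 : (T * (S * T⁻¹)).trace = S.trace := by
    rw [Matrix.trace_mul_comm, Matrix.mul_assoc, hT1, Matrix.mul_one]
  have l3 : ((T⁻¹ * S) * T).trace = S.trace := by
    rw [Matrix.trace_mul_comm, ← Matrix.mul_assoc, hT1', Matrix.one_mul]
  have hCinve : C⁻¹ = R⁻¹ * (M⁻¹ * R⁻¹) := by
    rw [hCdef, Matrix.mul_inv_rev, Matrix.mul_inv_rev]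
  have einner : R * (R⁻¹ * (M⁻¹ * R⁻¹)) = M⁻¹ * R⁻¹ := by
    rw [← Matrix.mul_assoc, hRR2, Matrix.one_mul]
  have hTT : T⁻¹ * T⁻¹ = C⁻¹ := by
    rw [← hT2, Matrix.mul_inv_rev]
  have e2 : D * C⁻¹ = R * (B * (M⁻¹ * R⁻¹)) := by
    rw [hCinve, hDdef]
    calc R * B * R * (R⁻¹ * (M⁻¹ * R⁻¹)) = R * (B * (R * (R⁻¹ * (M⁻¹ * R⁻¹)))) := by
          simp only [Matrix.mul_assoc]
      _ = R * (B * (M⁻¹ * R⁻¹)) := by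
          rw [← Matrix.mul_assoc R R⁻¹, hRR2, Matrix.one_mul]
  have l4 : ((T⁻¹ * S) * (S * T⁻¹)).trace = (M⁻¹ * B).trace := by
    calc ((T⁻¹ * S) * (S * T⁻¹)).trace
        = (T⁻¹ * (S * (S * T⁻¹))).trace := by simp only [Matrix.mul_assoc]
      _ = ((S * (S * T⁻¹)) * T⁻¹).trace := Matrix.trace_mul_comm _ _
      _ = ((S * S) * (T⁻¹ * T⁻¹)).trace := by simp only [Matrix.mul_assoc]
      _ = (D * C⁻¹).trace := by rw [hS2, hTT]
      _ = (R * (B * (M⁻¹ * R⁻¹))).trace := by rw [e2]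
      _ = ((B * (M⁻¹ * R⁻¹)) * R).trace := Matrix.trace_mul_comm _ _
      _ = (B * (M⁻¹ * (R⁻¹ * R))).trace := by simp only [Matrix.mul_assoc]
      _ = (B * M⁻¹).trace := by rw [hRR1, Matrix.mul_one]
      _ = (M⁻¹ * B).trace := Matrix.trace_mul_comm _ _
  have hXXtr : (X * Xᵀ).trace
      = (M * A).trace - S.trace - S.trace + (M⁻¹ * B).trace := by
    rw [hprod, Matrix.trace_sub, Matrix.trace_sub, Matrix.trace_sub, l1, l2, l3, l4]
    ring
  linarith [h0, hXXtr]

end KeyIneq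

section Tendsto

lemma tendsto_msqrt {α : Type*} {l : Filter α} {g : α → Mq} {Dm : Mq} (hD : Dm.PosDef)
    (hg : Tendsto g l (nhds Dm)) (hpsd : ∀ᶠ x in l, (g x).PosSemidef) :
    Tendsto (fun x => msqrt (g x)) l (nhds (msqrt Dm)) := by
  obtain ⟨c, hc, hlip⟩ := msqrt_lip hD
  refine tendsto_iff_norm_sub_tendsto_zero.mpr ?_
  have hgn : Tendsto (fun x => ‖g x - Dm‖) l (nhds 0) :=
    tendsto_iff_norm_sub_tendsto_zero.mp hg
  have hg0 : Tendsto (fun x => Real.sqrt (c * (q : ℝ) ^ 2) * ‖g x - Dm‖) l (nhds 0) := by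
    simpa only [mul_zero] using hgn.const_mul (Real.sqrt (c * (q : ℝ) ^ 2))
  refine squeeze_zero' (Eventually.of_forall fun x => norm_nonneg _) ?_ hg0
  filter_upwards [hpsd] with x hx
  calc ‖msqrt (g x) - msqrt Dm‖
      ≤ Real.sqrt (fro (msqrt (g x) - msqrt Dm)) := norm_le_sqrt_fro _
    _ ≤ Real.sqrt (c * (q : ℝ) ^ 2 * ‖g x - Dm‖ ^ 2) := by
        apply Real.sqrt_le_sqrt
        calc fro (msqrt (g x) - msqrt Dm) ≤ c * fro (g x - Dm) := hlip _ hx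
          _ ≤ c * ((q : ℝ) ^ 2 * ‖g x - Dm‖ ^ 2) :=
              mul_le_mul_of_nonneg_left (fro_le_norm _) hc
          _ = c * (q : ℝ) ^ 2 * ‖g x - Dm‖ ^ 2 := by ring
    _ = Real.sqrt (c * (q : ℝ) ^ 2) * ‖g x - Dm‖ := by
        rw [Real.sqrt_mul (by positivity), Real.sqrt_sq (norm_nonneg _)]

lemma tendsto_minv {α : Type*} {l : Filter α} {g : α → Mq} {Dm : Mq}
    (hg : Tendsto g l (nhds Dm)) (hD : IsUnit Dm.det) :
    Tendsto (fun x => (g x)⁻¹) l (nhds Dm⁻¹) := by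
  have hc : ContinuousAt Ring.inverse Dm.det := by
    rw [Ring.inverse_eq_inv']
    exact continuousAt_inv₀ hD.ne_zero
  exact (continuousAt_matrix_inv Dm hc).tendsto.comp hg

end Tendsto

end OTAux


open OTAux

/-- For positive definite `A, B` and `J = A^{−1/2}(A^{1/2} B A^{1/2})^{1/2} A^{−1/2}` :
`J` is (symmetric) positive definite, `J A J = B`,
`J⁻¹ = A^{1/2}(A^{1/2} B A^{1/2})^{−1/2} A^{1/2}`, and the Fréchet derivative of
`(A,B) ↦ 2 tr((A^{1/2} B A^{1/2})^{1/2})` (on pairs of symmetric matrices) at `(A,B)` in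
direction `(G,H)` is `tr(J G) + tr(J⁻¹ H)`. -/
theorem otMap_spec {q : ℕ} (A B : Matrix (Fin q) (Fin q) ℝ)
    (hA : A.PosDef) (hB : B.PosDef) :
    (otMap A B).PosDef ∧
      otMap A B * A * otMap A B = B ∧
      (otMap A B)⁻¹ = msqrt A * (msqrt (msqrt A * B * msqrt A))⁻¹ * msqrt A ∧
      HasFDerivWithinAt
        (fun p : Matrix (Fin q) (Fin q) ℝ × Matrix (Fin q) (Fin q) ℝ =>
          2 * (msqrt (msqrt p.1 * p.2 * msqrt p.1)).trace)
        (LinearMap.toContinuousLinearMap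
          (((Matrix.traceLinearMap (Fin q) ℝ ℝ).comp
              ((LinearMap.mulLeft ℝ (otMap A B)).comp
                (LinearMap.fst ℝ (Matrix (Fin q) (Fin q) ℝ) (Matrix (Fin q) (Fin q) ℝ)))) +
            ((Matrix.traceLinearMap (Fin q) ℝ ℝ).comp
              ((LinearMap.mulLeft ℝ (otMap A B)⁻¹).comp
                (LinearMap.snd ℝ (Matrix (Fin q) (Fin q) ℝ) (Matrix (Fin q) (Fin q) ℝ))))))
        {p : Matrix (Fin q) (Fin q) ℝ × Matrix (Fin q) (Fin q) ℝ |
          p.1.IsHermitian ∧ p.2.IsHermitian} (A, B) := by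
  classical
  have hJpd : (otMap A B).PosDef := otMap_posDef hA hB
  refine ⟨hJpd, otMap_mul hA hB, otMap_inv hA hB, ?_⟩
  refine hasFDerivWithinAt_iff_isLittleO.mpr ?_
  rw [Asymptotics.isLittleO_iff]
  intro c hc
  set s : Set (Matrix (Fin q) (Fin q) ℝ × Matrix (Fin q) (Fin q) ℝ) :=
    {p | p.1.IsHermitian ∧ p.2.IsHermitian} with hsdef
  set J := otMap A B with hJdef
  set p₀ : Matrix (Fin q) (Fin q) ℝ × Matrix (Fin q) (Fin q) ℝ := (A, B) with hp₀
  -- basic tendsto facts within the set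
  have hfst : Tendsto (fun p : Matrix (Fin q) (Fin q) ℝ × Matrix (Fin q) (Fin q) ℝ => p.1)
      (nhdsWithin p₀ s) (nhds A) :=
    (continuous_fst.tendsto p₀).mono_left nhdsWithin_le_nhds
  have hsnd : Tendsto (fun p : Matrix (Fin q) (Fin q) ℝ × Matrix (Fin q) (Fin q) ℝ => p.2)
      (nhdsWithin p₀ s) (nhds B) :=
    (continuous_snd.tendsto p₀).mono_left nhdsWithin_le_nhds
  have hmem : ∀ᶠ p in nhdsWithin p₀ s, p ∈ s := eventually_mem_nhdsWithin
  have hPD1 : ∀ᶠ p in nhdsWithin p₀ s, (p.1 : Matrix (Fin q) (Fin q) ℝ).PosDef := by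
    filter_upwards [hfst.eventually (eventually_posDef hA), hmem] with p h1 h2
    exact h1 h2.1
  have hPD2 : ∀ᶠ p in nhdsWithin p₀ s, (p.2 : Matrix (Fin q) (Fin q) ℝ).PosDef := by
    filter_upwards [hsnd.eventually (eventually_posDef hB), hmem] with p h1 h2
    exact h1 h2.2
  have hpsd1 : ∀ᶠ p in nhdsWithin p₀ s, (p.1 : Matrix (Fin q) (Fin q) ℝ).PosSemidef :=
    hPD1.mono fun p h => h.posSemidef
  have T1 : Tendsto (fun p : Matrix (Fin q) (Fin q) ℝ × Matrix (Fin q) (Fin q) ℝ =>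
      msqrt p.1) (nhdsWithin p₀ s) (nhds (msqrt A)) :=
    tendsto_msqrt hA hfst hpsd1
  have Tinner : Tendsto (fun p : Matrix (Fin q) (Fin q) ℝ × Matrix (Fin q) (Fin q) ℝ =>
      msqrt p.1 * p.2 * msqrt p.1) (nhdsWithin p₀ s) (nhds (msqrt A * B * msqrt A)) :=
    (T1.mul hsnd).mul T1
  have hpsdInner : ∀ᶠ p in nhdsWithin p₀ s,
      (msqrt p.1 * p.2 * msqrt p.1 : Matrix (Fin q) (Fin q) ℝ).PosSemidef := by
    filter_upwards [hPD1, hPD2] with p h1 h2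
    exact (inner_posDef h1 h2).posSemidef
  have T2 : Tendsto (fun p : Matrix (Fin q) (Fin q) ℝ × Matrix (Fin q) (Fin q) ℝ =>
      msqrt (msqrt p.1 * p.2 * msqrt p.1)) (nhdsWithin p₀ s)
      (nhds (msqrt (msqrt A * B * msqrt A))) :=
    tendsto_msqrt (inner_posDef hA hB) Tinner hpsdInner
  have Tinv1 : Tendsto (fun p : Matrix (Fin q) (Fin q) ℝ × Matrix (Fin q) (Fin q) ℝ =>
      (msqrt p.1)⁻¹) (nhdsWithin p₀ s) (nhds (msqrt A)⁻¹) :=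
    tendsto_minv T1 (det_isUnit (msqrt_posDef hA))
  have TJ : Tendsto (fun p : Matrix (Fin q) (Fin q) ℝ × Matrix (Fin q) (Fin q) ℝ =>
      otMap p.1 p.2) (nhdsWithin p₀ s) (nhds J) :=
    (Tinv1.mul T2).mul Tinv1
  have TJi : Tendsto (fun p : Matrix (Fin q) (Fin q) ℝ × Matrix (Fin q) (Fin q) ℝ =>
      (otMap p.1 p.2)⁻¹) (nhdsWithin p₀ s) (nhds J⁻¹) :=
    tendsto_minv TJ (det_isUnit hJpd)
  set ε := c / (2 * ((q : ℝ) ^ 2 + 1)) with hεdef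
  have hq1 : (0 : ℝ) < (q : ℝ) ^ 2 + 1 := by positivity
  have hεpos : 0 < ε := by positivity
  have hJev : ∀ᶠ p in nhdsWithin p₀ s, ‖otMap p.1 p.2 - J‖ < ε :=
    (tendsto_iff_norm_sub_tendsto_zero.mp TJ).eventually_lt_const hεpos
  have hJiev : ∀ᶠ p in nhdsWithin p₀ s, ‖(otMap p.1 p.2)⁻¹ - J⁻¹‖ < ε :=
    (tendsto_iff_norm_sub_tendsto_zero.mp TJi).eventually_lt_const hεpos
  have h2q : 2 * (q : ℝ) ^ 2 * ε ≤ c := by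
    rw [hεdef]
    rw [div_eq_mul_inv]
    have h1 : 2 * (q : ℝ) ^ 2 * (c * (2 * ((q : ℝ) ^ 2 + 1))⁻¹)
        = c * ((2 * (q : ℝ) ^ 2) * (2 * ((q : ℝ) ^ 2 + 1))⁻¹) := by ring
    rw [h1]
    have h2 : (2 * (q : ℝ) ^ 2) * (2 * ((q : ℝ) ^ 2 + 1))⁻¹ ≤ 1 := by
      rw [mul_inv_le_iff₀ (by positivity), one_mul]
      nlinarith
    nlinarith [hc]
  filter_upwards [hmem, hPD1, hPD2, hJev, hJiev] with p hps hp1 hp2 hJe hJie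
  change ‖2 * (msqrt (msqrt p.1 * p.2 * msqrt p.1)).trace - 2 * (msqrt (msqrt A * B * msqrt A)).trace
    - ((J * (p.1 - A)).trace + (J⁻¹ * (p.2 - B)).trace)‖ ≤ c * ‖p - p₀‖
  set Jp := otMap p.1 p.2 with hJpdef
  have hJppd : Jp.PosDef := otMap_posDef hp1 hp2
  -- trace identities and inequalities
  have kup : 2 * (msqrt (msqrt p.1 * p.2 * msqrt p.1)).trace
      ≤ (J * p.1).trace + (J⁻¹ * p.2).trace := key_ineq hp1 hp2 hJpd
  have keq0 : (J * A).trace + (J⁻¹ * B).trace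
      = 2 * (msqrt (msqrt A * B * msqrt A)).trace := key_eq hA hB
  have keqp : (Jp * p.1).trace + (Jp⁻¹ * p.2).trace
      = 2 * (msqrt (msqrt p.1 * p.2 * msqrt p.1)).trace := key_eq hp1 hp2
  have klow : 2 * (msqrt (msqrt A * B * msqrt A)).trace
      ≤ (Jp * A).trace + (Jp⁻¹ * B).trace := key_ineq hA hB hJppd
  have tJ1 : (J * (p.1 - A)).trace = (J * p.1).trace - (J * A).trace := by
    rw [mul_sub, Matrix.trace_sub]
  have tJ2 : (J⁻¹ * (p.2 - B)).trace = (J⁻¹ * p.2).trace - (J⁻¹ * B).trace := by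
    rw [mul_sub, Matrix.trace_sub]
  have tD1 : ((Jp - J) * (p.1 - A)).trace
      = (Jp * (p.1 - A)).trace - (J * (p.1 - A)).trace := by
    rw [sub_mul, Matrix.trace_sub]
  have tD2 : ((Jp⁻¹ - J⁻¹) * (p.2 - B)).trace
      = (Jp⁻¹ * (p.2 - B)).trace - (J⁻¹ * (p.2 - B)).trace := by
    rw [sub_mul, Matrix.trace_sub]
  have tP1 : (Jp * (p.1 - A)).trace = (Jp * p.1).trace - (Jp * A).trace := by
    rw [mul_sub, Matrix.trace_sub]
  have tP2 : (Jp⁻¹ * (p.2 - B)).trace = (Jp⁻¹ * p.2).trace - (Jp⁻¹ * B).trace := by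
    rw [mul_sub, Matrix.trace_sub]
  have b1 : |((Jp - J) * (p.1 - A)).trace| ≤ (q : ℝ) ^ 2 * (‖Jp - J‖ * ‖p.1 - A‖) :=
    abs_trace_mul_le _ _
  have b2 : |((Jp⁻¹ - J⁻¹) * (p.2 - B)).trace| ≤ (q : ℝ) ^ 2 * (‖Jp⁻¹ - J⁻¹‖ * ‖p.2 - B‖) :=
    abs_trace_mul_le _ _
  have hG : ‖p.1 - A‖ ≤ ‖p - p₀‖ := by
    have h := norm_fst_le (p - p₀)
    simpa using h
  have hH : ‖p.2 - B‖ ≤ ‖p - p₀‖ := by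
    have h := norm_snd_le (p - p₀)
    simpa using h
  have c1 : (q : ℝ) ^ 2 * (‖Jp - J‖ * ‖p.1 - A‖) ≤ (q : ℝ) ^ 2 * (ε * ‖p - p₀‖) := by
    gcongr
  have c2 : (q : ℝ) ^ 2 * (‖Jp⁻¹ - J⁻¹‖ * ‖p.2 - B‖) ≤ (q : ℝ) ^ 2 * (ε * ‖p - p₀‖) := by
    gcongr
  have hfinal : 2 * ((q : ℝ) ^ 2 * (ε * ‖p - p₀‖)) ≤ c * ‖p - p₀‖ := by
    have := mul_le_mul_of_nonneg_right h2q (norm_nonneg (p - p₀))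
    linarith [this]
  rw [Real.norm_eq_abs, abs_le]
  constructor
  · have hb1 := (abs_le.mp b1).1
    have hb2 := (abs_le.mp b2).1
    linarith [c1, c2, hfinal, keqp, klow, tJ1, tJ2, tD1, tD2, tP1, tP2, hb1, hb2]
  · have hpos : 0 ≤ c * ‖p - p₀‖ := by positivity
    linarith [kup, keq0, tJ1, tJ2, hpos]
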